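/- Consider the program E₄ over atoms p(n), n ∈ ℕ, with rules: 'p(1) ← not p(0)', 'p(n+1) ← p(n)' for every n ≥ 1, and 'p(0) ← not (count{X:p(X)} > 0)'. Under the following reduct semantics w.r.t. a candidate S: (a) 'p(1) ← not p(0)' is deleted if p(0) ∈ S, else becomes the fact p(1); (b) the last rule is deleted if the set {n : p(n)∈S} is nonempty and finite (aggregate true), becomes the fact p(0) if {n : p(n)∈S} is infinite (aggregate undefined), and becomes the fact p(0) if the set is empty (aggregate false); (c) rules 'p(n+1) ← p(n)' are unchanged. S is an answer set iff S equals the least model of the reduct. Then E₄ has no answer set; in particular neither {p(0)} nor {p(n) : n ≥ 1} is an answer set. -/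
import Mathlib


/-- Models and least models of ground definite programs. -/
def IsModel {α : Type*} (P : Set (α × Set α)) (A : Set α) : Prop :=
  ∀ r ∈ P, r.2 ⊆ A → r.1 ∈ A

def IsLeastModel {α : Type*} (P : Set (α × Set α)) (A : Set α) : Prop :=
  IsModel P A ∧ ∀ M : Set α, IsModel P M → A ⊆ M

/-- Atoms: n represents p(n).  Reduct of the program E₄ w.r.t. S:
(a) `p(1) ← not p(0)` is deleted if p(0) ∈ S, else becomes the fact p(1);
(b) `p(0) ← not (count{X:p(X)} > 0)` is deleted iff {n : p(n) ∈ S} is nonempty and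
finite (aggregate true); if it is infinite (aggregate undefined) or empty
(aggregate false), the rule becomes the fact p(0);
(c) the rules `p(n+1) ← p(n)` for n ≥ 1 are unchanged. -/
def reduct (S : Set ℕ) : Set (ℕ × Set ℕ) :=
  {r | 0 ∉ S ∧ r = (1, (∅ : Set ℕ))} ∪
  {r | ∃ n : ℕ, 1 ≤ n ∧ r = (n + 1, {n})} ∪
  {r | ¬ (S.Nonempty ∧ S.Finite) ∧ r = (0, (∅ : Set ℕ))}

def AnswerSet (S : Set ℕ) : Prop := IsLeastModel (reduct S) S

lemma no_answer_set (S : Set ℕ) : ¬ AnswerSet S := by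
  rintro ⟨hmod, hleast⟩
  by_cases h0 : 0 ∈ S
  · by_cases hfin : S.Finite
    · -- reduct is only the chain rules; ∅ is a model
      have hemp : IsModel (reduct S) (∅ : Set ℕ) := by
        rintro r ((hr | hr) | hr) hsub
        · exact absurd h0 hr.1
        · obtain ⟨n, hn, rfl⟩ := hr
          exact absurd (hsub rfl) (Set.notMem_empty n)
        · exact absurd ⟨⟨0, h0⟩, hfin⟩ hr.1
      exact (hleast ∅ hemp) h0
    · -- {0} is a model, but S is infinite
      have hm : IsModel (reduct S) {0} := by
        rintro r ((hr | hr) | hr) hsub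
        · exact absurd h0 hr.1
        · obtain ⟨n, hn, rfl⟩ := hr
          have : n = 0 := hsub rfl
          omega
        · rw [hr.2]; rfl
      have hsub := hleast {0} hm
      exact hfin ((Set.finite_singleton 0).subset hsub)
  · by_cases hnf : S.Nonempty ∧ S.Finite
    · -- fact p(1) plus chain forces S infinite
      have h1 : 1 ∈ S := by
        have := hmod (1, ∅) (Or.inl (Or.inl ⟨h0, rfl⟩))
        exact this (Set.empty_subset S)
      have hall : ∀ n : ℕ, 1 ≤ n → n ∈ S := by
        intro n hn
        induction n, hn using Nat.le_induction with
        | base => exact h1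
        | succ n hn ih =>
          exact hmod (n + 1, {n}) (Or.inl (Or.inr ⟨n, hn, rfl⟩))
            (Set.singleton_subset_iff.mpr ih)
      have hinf : S.Infinite := by
        have : Set.Ici 1 ⊆ S := fun n hn => hall n hn
        exact (Set.Ici_infinite 1).mono this
      exact hinf hnf.2
    · -- fact p(0) forces 0 ∈ S
      have : 0 ∈ S := hmod (0, ∅) (Or.inr ⟨hnf, rfl⟩) (Set.empty_subset S)
      exact h0 this

theorem E4_has_no_answer_set :
    (∀ S : Set ℕ, ¬ AnswerSet S) ∧
    ¬ AnswerSet {0} ∧ ¬ AnswerSet {n : ℕ | 1 ≤ n} := by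
  exact ⟨no_answer_set, no_answer_set _, no_answer_set _⟩
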